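/- The subgroup G of GL(4,ℂ) generated by the two matrices g₁ = diag(i, -i, i, -i) and g₂ = -(1/2)·blockdiag(((1+i)ε, (-1+i)ε; (1+i)ε, (1-i)ε), ((1+i)ε², (-1+i)ε²; (1+i)ε², (1-i)ε²)), where ε = e^{2πi/3}, is a finite group of order 24 isomorphic to SL(2, 𝔽₃) (the binary tetrahedral group). -/

import Mathlib

open Matrix Complex

noncomputable section

/-- ε = e^{2πi/3}, a primitive third root of unity. -/
def ε : ℂ := Complex.exp (2 * Real.pi * Complex.I / 3)

/-- g₁ = diag(i, -i, i, -i). -/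
def g₁ : Matrix (Fin 4) (Fin 4) ℂ :=
  !![I, 0, 0, 0; 0, -I, 0, 0; 0, 0, I, 0; 0, 0, 0, -I]

/-- g₂ = -(1/2)·blockdiag(((1+i)ε, (-1+i)ε; (1+i)ε, (1-i)ε),
    ((1+i)ε², (-1+i)ε²; (1+i)ε², (1-i)ε²)). -/
def g₂ : Matrix (Fin 4) (Fin 4) ℂ :=
  (-(1/2 : ℂ)) • !![(1+I)*ε, (-1+I)*ε, 0, 0;
                    (1+I)*ε, (1-I)*ε, 0, 0;
                    0, 0, (1+I)*ε^2, (-1+I)*ε^2;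
                    0, 0, (1+I)*ε^2, (1-I)*ε^2]

/-- G is the subgroup of GL(4,ℂ) (the group of units of the matrix ring)
    generated by g₁ and g₂. -/
def G : Subgroup (Matrix (Fin 4) (Fin 4) ℂ)ˣ :=
  Subgroup.closure {u : (Matrix (Fin 4) (Fin 4) ℂ)ˣ |
    (u : Matrix (Fin 4) (Fin 4) ℂ) = g₁ ∨ (u : Matrix (Fin 4) (Fin 4) ℂ) = g₂}


lemma hε3 : ε ^ 3 = 1 := by
  rw [ε, ← Complex.exp_nat_mul]
  rw [show ((3:ℕ):ℂ) * (2 * ↑Real.pi * I / 3) = 2 * ↑Real.pi * I by push_cast; ring]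
  exact Complex.exp_two_pi_mul_I

lemma hε_ne_one : ε ≠ 1 := by
  rw [ε]
  intro h
  rw [Complex.exp_eq_one_iff] at h
  obtain ⟨n, hn⟩ := h
  have hπ : (Real.pi : ℂ) ≠ 0 := by exact_mod_cast Real.pi_ne_zero
  have h3 : ((3 * n : ℤ) : ℂ) = 1 := by
    have h2 : (2 * (Real.pi:ℂ) * I) * (((3 * n : ℤ) : ℂ) - 1) = 0 := by
      push_cast
      linear_combination (-3) * hn
    rcases mul_eq_zero.1 h2 with h | h
    · rcases mul_eq_zero.1 h with h' | h'
      · norm_num at h'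
      · exact absurd h' Complex.I_ne_zero
    · linear_combination h
  have : (3 * n : ℤ) = 1 := by exact_mod_cast h3
  omega

lemma hε2 : ε ^ 2 = -1 - ε := by
  have h : (ε - 1) * (ε ^ 2 + ε + 1) = 0 := by linear_combination hε3
  rcases mul_eq_zero.1 h with h1 | h2
  · exact absurd (by linear_combination h1) hε_ne_one
  · linear_combination h2

@[ext] structure K4 where
  a : ℚ
  b : ℚ
  c : ℚ
  d : ℚ
deriving DecidableEq

namespace K4

instance : Zero K4 := ⟨⟨0,0,0,0⟩⟩
instance : One K4 := ⟨⟨1,0,0,0⟩⟩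
instance : Add K4 := ⟨fun x y => ⟨x.a+y.a, x.b+y.b, x.c+y.c, x.d+y.d⟩⟩
instance : Neg K4 := ⟨fun x => ⟨-x.a, -x.b, -x.c, -x.d⟩⟩
instance : Mul K4 := ⟨fun x y =>
  ⟨x.a*y.a - x.b*y.b - x.c*y.c + x.d*y.d,
   x.a*y.b + x.b*y.a - x.c*y.d - x.d*y.c,
   x.a*y.c + x.c*y.a - x.c*y.c - x.b*y.d - x.d*y.b + x.d*y.d,
   x.a*y.d + x.d*y.a + x.b*y.c + x.c*y.b - x.c*y.d - x.d*y.c⟩⟩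

@[simp] lemma mul_a (x y : K4) : (x*y).a = x.a*y.a - x.b*y.b - x.c*y.c + x.d*y.d := rfl
@[simp] lemma mul_b (x y : K4) : (x*y).b = x.a*y.b + x.b*y.a - x.c*y.d - x.d*y.c := rfl
@[simp] lemma mul_c (x y : K4) : (x*y).c = x.a*y.c + x.c*y.a - x.c*y.c - x.b*y.d - x.d*y.b + x.d*y.d := rfl
@[simp] lemma mul_d (x y : K4) : (x*y).d = x.a*y.d + x.d*y.a + x.b*y.c + x.c*y.b - x.c*y.d - x.d*y.c := rfl
@[simp] lemma add_a (x y : K4) : (x+y).a = x.a+y.a := rfl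
@[simp] lemma add_b (x y : K4) : (x+y).b = x.b+y.b := rfl
@[simp] lemma add_c (x y : K4) : (x+y).c = x.c+y.c := rfl
@[simp] lemma add_d (x y : K4) : (x+y).d = x.d+y.d := rfl
@[simp] lemma neg_a (x : K4) : (-x).a = -x.a := rfl
@[simp] lemma neg_b (x : K4) : (-x).b = -x.b := rfl
@[simp] lemma neg_c (x : K4) : (-x).c = -x.c := rfl
@[simp] lemma neg_d (x : K4) : (-x).d = -x.d := rfl
@[simp] lemma one_a : (1:K4).a = 1 := rfl
@[simp] lemma one_b : (1:K4).b = 0 := rfl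
@[simp] lemma one_c : (1:K4).c = 0 := rfl
@[simp] lemma one_d : (1:K4).d = 0 := rfl
@[simp] lemma zero_a : (0:K4).a = 0 := rfl
@[simp] lemma zero_b : (0:K4).b = 0 := rfl
@[simp] lemma zero_c : (0:K4).c = 0 := rfl
@[simp] lemma zero_d : (0:K4).d = 0 := rfl

instance : CommRing K4 where
  add_assoc x y z := by ext <;> simp <;> ring
  zero_add x := by ext <;> simp
  add_zero x := by ext <;> simp
  add_comm x y := by ext <;> simp <;> ring
  neg_add_cancel x := by ext <;> simp
  left_distrib x y z := by ext <;> simp <;> ring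
  right_distrib x y z := by ext <;> simp <;> ring
  zero_mul x := by ext <;> simp
  mul_zero x := by ext <;> simp
  mul_assoc x y z := by ext <;> simp <;> ring
  one_mul x := by ext <;> simp
  mul_one x := by ext <;> simp
  mul_comm x y := by ext <;> simp <;> ring
  nsmul := nsmulRec
  zsmul := zsmulRec

end K4

def φ : K4 →+* ℂ where
  toFun x := (x.a : ℂ) + x.b * I + x.c * ε + x.d * (I * ε)
  map_one' := by simp
  map_zero' := by simp
  map_add' x y := by simp; push_cast; ring
  map_mul' x y := by
    simp only [K4.mul_a, K4.mul_b, K4.mul_c, K4.mul_d]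
    push_cast
    linear_combination (-(x.d:ℂ)*y.d*ε^2 - (x.d*y.b + x.b*y.d)*ε - x.b*y.b) * Complex.I_sq
      + ((x.d:ℂ)*y.d - (x.d*y.c + x.c*y.d)*I - x.c*y.c) * hε2

@[simp] lemma φ_apply (x : K4) : φ x = (x.a : ℂ) + x.b * I + x.c * ε + x.d * (I * ε) := rfl

lemma hεval : ε = (↑(-(1/2) : ℝ) : ℂ) + (↑(Real.sqrt 3 / 2 : ℝ) : ℂ) * I := by
  have hc : Real.cos (2 * Real.pi / 3) = -(1/2) := by
    rw [show (2 * Real.pi / 3 : ℝ) = Real.pi - Real.pi/3 by ring, Real.cos_pi_sub,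
      Real.cos_pi_div_three]
  have hs : Real.sin (2 * Real.pi / 3) = Real.sqrt 3 / 2 := by
    rw [show (2 * Real.pi / 3 : ℝ) = Real.pi - Real.pi/3 by ring, Real.sin_pi_sub,
      Real.sin_pi_div_three]
  rw [ε, show (2 * (Real.pi:ℂ) * I / 3) = ((2 * Real.pi / 3 : ℝ) : ℂ) * I by push_cast; ring,
    Complex.exp_mul_I, ← Complex.ofReal_cos, ← Complex.ofReal_sin, hc, hs]

lemma sqrt3_irr : Irrational (Real.sqrt 3) := by
  simpa using Nat.prime_three.irrational_sqrt

lemma φ_inj : Function.Injective φ := by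
  have key : ∀ z : K4, φ z = 0 → z = 0 := by
    rintro ⟨a, b, c, d⟩ h
    rw [φ_apply] at h
    rw [hεval] at h
    have hre := congrArg Complex.re h
    have him := congrArg Complex.im h
    simp [Complex.add_re, Complex.add_im, Complex.mul_re, Complex.mul_im] at hre him
    have hd : d = 0 := by
      by_contra hd0
      refine sqrt3_irr ⟨(2*a - c)/d, ?_⟩
      push_cast
      rw [div_eq_iff (by exact_mod_cast hd0)]
      norm_num at hre ⊢
      linarith [hre]
    have hc0 : c = 0 := by
      by_contra hc0
      refine sqrt3_irr ⟨(d - 2*b)/c, ?_⟩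
      push_cast
      rw [div_eq_iff (by exact_mod_cast hc0)]
      subst hd
      norm_num at him ⊢
      linarith [him]
    subst hd; subst hc0
    have ha : a = 0 := by exact_mod_cast (by linarith [hre] : (a:ℝ) = 0)
    have hb : b = 0 := by exact_mod_cast (by linarith [him] : (b:ℝ) = 0)
    ext <;> simp [ha, hb]
  intro x y hxy
  have : φ (x - y) = 0 := by rw [map_sub, hxy, sub_self]
  exact sub_eq_zero.mp (key _ this)

abbrev SL23 := Matrix.SpecialLinearGroup (Fin 2) (ZMod 3)

instance : DecidableEq SL23 := fun a b =>
  decidable_of_iff (a.1 = b.1) ⟨fun h => Subtype.ext h, fun h => h ▸ rfl⟩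

def s : SL23 := ⟨!![1, 1; 1, 2], by decide⟩
def t : SL23 := ⟨!![0, 1; 2, 2], by decide⟩

def tbl : List (Matrix (Fin 2) (Fin 2) (ZMod 3) × Matrix (Fin 4) (Fin 4) K4) :=
  [(!![1, 0; 0, 1],
    !![⟨1, 0, 0, 0⟩, ⟨0, 0, 0, 0⟩, ⟨0, 0, 0, 0⟩, ⟨0, 0, 0, 0⟩;
        ⟨0, 0, 0, 0⟩, ⟨1, 0, 0, 0⟩, ⟨0, 0, 0, 0⟩, ⟨0, 0, 0, 0⟩;
        ⟨0, 0, 0, 0⟩, ⟨0, 0, 0, 0⟩, ⟨1, 0, 0, 0⟩, ⟨0, 0, 0, 0⟩;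
        ⟨0, 0, 0, 0⟩, ⟨0, 0, 0, 0⟩, ⟨0, 0, 0, 0⟩, ⟨1, 0, 0, 0⟩]),
   (!![1, 1; 1, 2],
    !![⟨0, 1, 0, 0⟩, ⟨0, 0, 0, 0⟩, ⟨0, 0, 0, 0⟩, ⟨0, 0, 0, 0⟩;
        ⟨0, 0, 0, 0⟩, ⟨0, -1, 0, 0⟩, ⟨0, 0, 0, 0⟩, ⟨0, 0, 0, 0⟩;
        ⟨0, 0, 0, 0⟩, ⟨0, 0, 0, 0⟩, ⟨0, 1, 0, 0⟩, ⟨0, 0, 0, 0⟩;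
        ⟨0, 0, 0, 0⟩, ⟨0, 0, 0, 0⟩, ⟨0, 0, 0, 0⟩, ⟨0, -1, 0, 0⟩]),
   (!![0, 1; 2, 2],
    !![⟨0, 0, (-1/2 : ℚ), (-1/2 : ℚ)⟩, ⟨0, 0, (1/2 : ℚ), (-1/2 : ℚ)⟩, ⟨0, 0, 0, 0⟩, ⟨0, 0, 0, 0⟩;
        ⟨0, 0, (-1/2 : ℚ), (-1/2 : ℚ)⟩, ⟨0, 0, (-1/2 : ℚ), (1/2 : ℚ)⟩, ⟨0, 0, 0, 0⟩, ⟨0, 0, 0, 0⟩;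
        ⟨0, 0, 0, 0⟩, ⟨0, 0, 0, 0⟩, ⟨(1/2 : ℚ), (1/2 : ℚ), (1/2 : ℚ), (1/2 : ℚ)⟩, ⟨(-1/2 : ℚ), (1/2 : ℚ), (-1/2 : ℚ), (1/2 : ℚ)⟩;
        ⟨0, 0, 0, 0⟩, ⟨0, 0, 0, 0⟩, ⟨(1/2 : ℚ), (1/2 : ℚ), (1/2 : ℚ), (1/2 : ℚ)⟩, ⟨(1/2 : ℚ), (-1/2 : ℚ), (1/2 : ℚ), (-1/2 : ℚ)⟩]),
   (!![2, 0; 0, 2],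
    !![⟨-1, 0, 0, 0⟩, ⟨0, 0, 0, 0⟩, ⟨0, 0, 0, 0⟩, ⟨0, 0, 0, 0⟩;
        ⟨0, 0, 0, 0⟩, ⟨-1, 0, 0, 0⟩, ⟨0, 0, 0, 0⟩, ⟨0, 0, 0, 0⟩;
        ⟨0, 0, 0, 0⟩, ⟨0, 0, 0, 0⟩, ⟨-1, 0, 0, 0⟩, ⟨0, 0, 0, 0⟩;
        ⟨0, 0, 0, 0⟩, ⟨0, 0, 0, 0⟩, ⟨0, 0, 0, 0⟩, ⟨-1, 0, 0, 0⟩]),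
   (!![2, 0; 1, 2],
    !![⟨0, 0, (1/2 : ℚ), (-1/2 : ℚ)⟩, ⟨0, 0, (1/2 : ℚ), (1/2 : ℚ)⟩, ⟨0, 0, 0, 0⟩, ⟨0, 0, 0, 0⟩;
        ⟨0, 0, (-1/2 : ℚ), (1/2 : ℚ)⟩, ⟨0, 0, (1/2 : ℚ), (1/2 : ℚ)⟩, ⟨0, 0, 0, 0⟩, ⟨0, 0, 0, 0⟩;
        ⟨0, 0, 0, 0⟩, ⟨0, 0, 0, 0⟩, ⟨(-1/2 : ℚ), (1/2 : ℚ), (-1/2 : ℚ), (1/2 : ℚ)⟩, ⟨(-1/2 : ℚ), (-1/2 : ℚ), (-1/2 : ℚ), (-1/2 : ℚ)⟩;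
        ⟨0, 0, 0, 0⟩, ⟨0, 0, 0, 0⟩, ⟨(1/2 : ℚ), (-1/2 : ℚ), (1/2 : ℚ), (-1/2 : ℚ)⟩, ⟨(-1/2 : ℚ), (-1/2 : ℚ), (-1/2 : ℚ), (-1/2 : ℚ)⟩]),
   (!![1, 2; 1, 0],
    !![⟨0, 0, (1/2 : ℚ), (-1/2 : ℚ)⟩, ⟨0, 0, (-1/2 : ℚ), (-1/2 : ℚ)⟩, ⟨0, 0, 0, 0⟩, ⟨0, 0, 0, 0⟩;
        ⟨0, 0, (1/2 : ℚ), (-1/2 : ℚ)⟩, ⟨0, 0, (1/2 : ℚ), (1/2 : ℚ)⟩, ⟨0, 0, 0, 0⟩, ⟨0, 0, 0, 0⟩;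
        ⟨0, 0, 0, 0⟩, ⟨0, 0, 0, 0⟩, ⟨(-1/2 : ℚ), (1/2 : ℚ), (-1/2 : ℚ), (1/2 : ℚ)⟩, ⟨(1/2 : ℚ), (1/2 : ℚ), (1/2 : ℚ), (1/2 : ℚ)⟩;
        ⟨0, 0, 0, 0⟩, ⟨0, 0, 0, 0⟩, ⟨(-1/2 : ℚ), (1/2 : ℚ), (-1/2 : ℚ), (1/2 : ℚ)⟩, ⟨(-1/2 : ℚ), (-1/2 : ℚ), (-1/2 : ℚ), (-1/2 : ℚ)⟩]),
   (!![2, 2; 1, 0],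
    !![⟨(1/2 : ℚ), (-1/2 : ℚ), (1/2 : ℚ), (-1/2 : ℚ)⟩, ⟨(1/2 : ℚ), (-1/2 : ℚ), (1/2 : ℚ), (-1/2 : ℚ)⟩, ⟨0, 0, 0, 0⟩, ⟨0, 0, 0, 0⟩;
        ⟨(-1/2 : ℚ), (-1/2 : ℚ), (-1/2 : ℚ), (-1/2 : ℚ)⟩, ⟨(1/2 : ℚ), (1/2 : ℚ), (1/2 : ℚ), (1/2 : ℚ)⟩, ⟨0, 0, 0, 0⟩, ⟨0, 0, 0, 0⟩;
        ⟨0, 0, 0, 0⟩, ⟨0, 0, 0, 0⟩, ⟨0, 0, (-1/2 : ℚ), (1/2 : ℚ)⟩, ⟨0, 0, (-1/2 : ℚ), (1/2 : ℚ)⟩;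
        ⟨0, 0, 0, 0⟩, ⟨0, 0, 0, 0⟩, ⟨0, 0, (1/2 : ℚ), (1/2 : ℚ)⟩, ⟨0, 0, (-1/2 : ℚ), (-1/2 : ℚ)⟩]),
   (!![2, 2; 2, 1],
    !![⟨0, -1, 0, 0⟩, ⟨0, 0, 0, 0⟩, ⟨0, 0, 0, 0⟩, ⟨0, 0, 0, 0⟩;
        ⟨0, 0, 0, 0⟩, ⟨0, 1, 0, 0⟩, ⟨0, 0, 0, 0⟩, ⟨0, 0, 0, 0⟩;
        ⟨0, 0, 0, 0⟩, ⟨0, 0, 0, 0⟩, ⟨0, -1, 0, 0⟩, ⟨0, 0, 0, 0⟩;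
        ⟨0, 0, 0, 0⟩, ⟨0, 0, 0, 0⟩, ⟨0, 0, 0, 0⟩, ⟨0, 1, 0, 0⟩]),
   (!![0, 2; 1, 1],
    !![⟨0, 0, (1/2 : ℚ), (1/2 : ℚ)⟩, ⟨0, 0, (-1/2 : ℚ), (1/2 : ℚ)⟩, ⟨0, 0, 0, 0⟩, ⟨0, 0, 0, 0⟩;
        ⟨0, 0, (1/2 : ℚ), (1/2 : ℚ)⟩, ⟨0, 0, (1/2 : ℚ), (-1/2 : ℚ)⟩, ⟨0, 0, 0, 0⟩, ⟨0, 0, 0, 0⟩;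
        ⟨0, 0, 0, 0⟩, ⟨0, 0, 0, 0⟩, ⟨(-1/2 : ℚ), (-1/2 : ℚ), (-1/2 : ℚ), (-1/2 : ℚ)⟩, ⟨(1/2 : ℚ), (-1/2 : ℚ), (1/2 : ℚ), (-1/2 : ℚ)⟩;
        ⟨0, 0, 0, 0⟩, ⟨0, 0, 0, 0⟩, ⟨(-1/2 : ℚ), (-1/2 : ℚ), (-1/2 : ℚ), (-1/2 : ℚ)⟩, ⟨(-1/2 : ℚ), (1/2 : ℚ), (-1/2 : ℚ), (1/2 : ℚ)⟩]),
   (!![2, 2; 0, 2],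
    !![⟨0, 0, (1/2 : ℚ), (1/2 : ℚ)⟩, ⟨0, 0, (1/2 : ℚ), (-1/2 : ℚ)⟩, ⟨0, 0, 0, 0⟩, ⟨0, 0, 0, 0⟩;
        ⟨0, 0, (-1/2 : ℚ), (-1/2 : ℚ)⟩, ⟨0, 0, (1/2 : ℚ), (-1/2 : ℚ)⟩, ⟨0, 0, 0, 0⟩, ⟨0, 0, 0, 0⟩;
        ⟨0, 0, 0, 0⟩, ⟨0, 0, 0, 0⟩, ⟨(-1/2 : ℚ), (-1/2 : ℚ), (-1/2 : ℚ), (-1/2 : ℚ)⟩, ⟨(-1/2 : ℚ), (1/2 : ℚ), (-1/2 : ℚ), (1/2 : ℚ)⟩;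
        ⟨0, 0, 0, 0⟩, ⟨0, 0, 0, 0⟩, ⟨(1/2 : ℚ), (1/2 : ℚ), (1/2 : ℚ), (1/2 : ℚ)⟩, ⟨(-1/2 : ℚ), (1/2 : ℚ), (-1/2 : ℚ), (1/2 : ℚ)⟩]),
   (!![0, 2; 1, 2],
    !![⟨(1/2 : ℚ), (1/2 : ℚ), (1/2 : ℚ), (1/2 : ℚ)⟩, ⟨(1/2 : ℚ), (1/2 : ℚ), (1/2 : ℚ), (1/2 : ℚ)⟩, ⟨0, 0, 0, 0⟩, ⟨0, 0, 0, 0⟩;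
        ⟨(-1/2 : ℚ), (1/2 : ℚ), (-1/2 : ℚ), (1/2 : ℚ)⟩, ⟨(1/2 : ℚ), (-1/2 : ℚ), (1/2 : ℚ), (-1/2 : ℚ)⟩, ⟨0, 0, 0, 0⟩, ⟨0, 0, 0, 0⟩;
        ⟨0, 0, 0, 0⟩, ⟨0, 0, 0, 0⟩, ⟨0, 0, (-1/2 : ℚ), (-1/2 : ℚ)⟩, ⟨0, 0, (-1/2 : ℚ), (-1/2 : ℚ)⟩;
        ⟨0, 0, 0, 0⟩, ⟨0, 0, 0, 0⟩, ⟨0, 0, (1/2 : ℚ), (-1/2 : ℚ)⟩, ⟨0, 0, (-1/2 : ℚ), (1/2 : ℚ)⟩]),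
   (!![1, 2; 0, 1],
    !![⟨(1/2 : ℚ), (-1/2 : ℚ), (1/2 : ℚ), (-1/2 : ℚ)⟩, ⟨(-1/2 : ℚ), (1/2 : ℚ), (-1/2 : ℚ), (1/2 : ℚ)⟩, ⟨0, 0, 0, 0⟩, ⟨0, 0, 0, 0⟩;
        ⟨(1/2 : ℚ), (1/2 : ℚ), (1/2 : ℚ), (1/2 : ℚ)⟩, ⟨(1/2 : ℚ), (1/2 : ℚ), (1/2 : ℚ), (1/2 : ℚ)⟩, ⟨0, 0, 0, 0⟩, ⟨0, 0, 0, 0⟩;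
        ⟨0, 0, 0, 0⟩, ⟨0, 0, 0, 0⟩, ⟨0, 0, (-1/2 : ℚ), (1/2 : ℚ)⟩, ⟨0, 0, (1/2 : ℚ), (-1/2 : ℚ)⟩;
        ⟨0, 0, 0, 0⟩, ⟨0, 0, 0, 0⟩, ⟨0, 0, (-1/2 : ℚ), (-1/2 : ℚ)⟩, ⟨0, 0, (-1/2 : ℚ), (-1/2 : ℚ)⟩]),
   (!![1, 0; 1, 1],
    !![⟨(1/2 : ℚ), (1/2 : ℚ), (1/2 : ℚ), (1/2 : ℚ)⟩, ⟨(-1/2 : ℚ), (-1/2 : ℚ), (-1/2 : ℚ), (-1/2 : ℚ)⟩, ⟨0, 0, 0, 0⟩, ⟨0, 0, 0, 0⟩;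
        ⟨(1/2 : ℚ), (-1/2 : ℚ), (1/2 : ℚ), (-1/2 : ℚ)⟩, ⟨(1/2 : ℚ), (-1/2 : ℚ), (1/2 : ℚ), (-1/2 : ℚ)⟩, ⟨0, 0, 0, 0⟩, ⟨0, 0, 0, 0⟩;
        ⟨0, 0, 0, 0⟩, ⟨0, 0, 0, 0⟩, ⟨0, 0, (-1/2 : ℚ), (-1/2 : ℚ)⟩, ⟨0, 0, (1/2 : ℚ), (1/2 : ℚ)⟩;
        ⟨0, 0, 0, 0⟩, ⟨0, 0, 0, 0⟩, ⟨0, 0, (-1/2 : ℚ), (1/2 : ℚ)⟩, ⟨0, 0, (-1/2 : ℚ), (1/2 : ℚ)⟩]),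
   (!![1, 0; 2, 1],
    !![⟨0, 0, (-1/2 : ℚ), (1/2 : ℚ)⟩, ⟨0, 0, (-1/2 : ℚ), (-1/2 : ℚ)⟩, ⟨0, 0, 0, 0⟩, ⟨0, 0, 0, 0⟩;
        ⟨0, 0, (1/2 : ℚ), (-1/2 : ℚ)⟩, ⟨0, 0, (-1/2 : ℚ), (-1/2 : ℚ)⟩, ⟨0, 0, 0, 0⟩, ⟨0, 0, 0, 0⟩;
        ⟨0, 0, 0, 0⟩, ⟨0, 0, 0, 0⟩, ⟨(1/2 : ℚ), (-1/2 : ℚ), (1/2 : ℚ), (-1/2 : ℚ)⟩, ⟨(1/2 : ℚ), (1/2 : ℚ), (1/2 : ℚ), (1/2 : ℚ)⟩;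
        ⟨0, 0, 0, 0⟩, ⟨0, 0, 0, 0⟩, ⟨(-1/2 : ℚ), (1/2 : ℚ), (-1/2 : ℚ), (1/2 : ℚ)⟩, ⟨(1/2 : ℚ), (1/2 : ℚ), (1/2 : ℚ), (1/2 : ℚ)⟩]),
   (!![2, 1; 2, 0],
    !![⟨0, 0, (-1/2 : ℚ), (1/2 : ℚ)⟩, ⟨0, 0, (1/2 : ℚ), (1/2 : ℚ)⟩, ⟨0, 0, 0, 0⟩, ⟨0, 0, 0, 0⟩;
        ⟨0, 0, (-1/2 : ℚ), (1/2 : ℚ)⟩, ⟨0, 0, (-1/2 : ℚ), (-1/2 : ℚ)⟩, ⟨0, 0, 0, 0⟩, ⟨0, 0, 0, 0⟩;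
        ⟨0, 0, 0, 0⟩, ⟨0, 0, 0, 0⟩, ⟨(1/2 : ℚ), (-1/2 : ℚ), (1/2 : ℚ), (-1/2 : ℚ)⟩, ⟨(-1/2 : ℚ), (-1/2 : ℚ), (-1/2 : ℚ), (-1/2 : ℚ)⟩;
        ⟨0, 0, 0, 0⟩, ⟨0, 0, 0, 0⟩, ⟨(1/2 : ℚ), (-1/2 : ℚ), (1/2 : ℚ), (-1/2 : ℚ)⟩, ⟨(1/2 : ℚ), (1/2 : ℚ), (1/2 : ℚ), (1/2 : ℚ)⟩]),
   (!![1, 1; 2, 0],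
    !![⟨(-1/2 : ℚ), (1/2 : ℚ), (-1/2 : ℚ), (1/2 : ℚ)⟩, ⟨(-1/2 : ℚ), (1/2 : ℚ), (-1/2 : ℚ), (1/2 : ℚ)⟩, ⟨0, 0, 0, 0⟩, ⟨0, 0, 0, 0⟩;
        ⟨(1/2 : ℚ), (1/2 : ℚ), (1/2 : ℚ), (1/2 : ℚ)⟩, ⟨(-1/2 : ℚ), (-1/2 : ℚ), (-1/2 : ℚ), (-1/2 : ℚ)⟩, ⟨0, 0, 0, 0⟩, ⟨0, 0, 0, 0⟩;
        ⟨0, 0, 0, 0⟩, ⟨0, 0, 0, 0⟩, ⟨0, 0, (1/2 : ℚ), (-1/2 : ℚ)⟩, ⟨0, 0, (1/2 : ℚ), (-1/2 : ℚ)⟩;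
        ⟨0, 0, 0, 0⟩, ⟨0, 0, 0, 0⟩, ⟨0, 0, (-1/2 : ℚ), (-1/2 : ℚ)⟩, ⟨0, 0, (1/2 : ℚ), (1/2 : ℚ)⟩]),
   (!![2, 1; 0, 2],
    !![⟨(-1/2 : ℚ), (1/2 : ℚ), (-1/2 : ℚ), (1/2 : ℚ)⟩, ⟨(1/2 : ℚ), (-1/2 : ℚ), (1/2 : ℚ), (-1/2 : ℚ)⟩, ⟨0, 0, 0, 0⟩, ⟨0, 0, 0, 0⟩;
        ⟨(-1/2 : ℚ), (-1/2 : ℚ), (-1/2 : ℚ), (-1/2 : ℚ)⟩, ⟨(-1/2 : ℚ), (-1/2 : ℚ), (-1/2 : ℚ), (-1/2 : ℚ)⟩, ⟨0, 0, 0, 0⟩, ⟨0, 0, 0, 0⟩;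
        ⟨0, 0, 0, 0⟩, ⟨0, 0, 0, 0⟩, ⟨0, 0, (1/2 : ℚ), (-1/2 : ℚ)⟩, ⟨0, 0, (-1/2 : ℚ), (1/2 : ℚ)⟩;
        ⟨0, 0, 0, 0⟩, ⟨0, 0, 0, 0⟩, ⟨0, 0, (1/2 : ℚ), (1/2 : ℚ)⟩, ⟨0, 0, (1/2 : ℚ), (1/2 : ℚ)⟩]),
   (!![1, 2; 2, 2],
    !![⟨0, 0, 0, 0⟩, ⟨0, 1, 0, 0⟩, ⟨0, 0, 0, 0⟩, ⟨0, 0, 0, 0⟩;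
        ⟨0, 1, 0, 0⟩, ⟨0, 0, 0, 0⟩, ⟨0, 0, 0, 0⟩, ⟨0, 0, 0, 0⟩;
        ⟨0, 0, 0, 0⟩, ⟨0, 0, 0, 0⟩, ⟨0, 0, 0, 0⟩, ⟨0, 1, 0, 0⟩;
        ⟨0, 0, 0, 0⟩, ⟨0, 0, 0, 0⟩, ⟨0, 1, 0, 0⟩, ⟨0, 0, 0, 0⟩]),
   (!![0, 1; 2, 0],
    !![⟨0, 0, 0, 0⟩, ⟨-1, 0, 0, 0⟩, ⟨0, 0, 0, 0⟩, ⟨0, 0, 0, 0⟩;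
        ⟨1, 0, 0, 0⟩, ⟨0, 0, 0, 0⟩, ⟨0, 0, 0, 0⟩, ⟨0, 0, 0, 0⟩;
        ⟨0, 0, 0, 0⟩, ⟨0, 0, 0, 0⟩, ⟨0, 0, 0, 0⟩, ⟨-1, 0, 0, 0⟩;
        ⟨0, 0, 0, 0⟩, ⟨0, 0, 0, 0⟩, ⟨1, 0, 0, 0⟩, ⟨0, 0, 0, 0⟩]),
   (!![1, 1; 0, 1],
    !![⟨0, 0, (-1/2 : ℚ), (-1/2 : ℚ)⟩, ⟨0, 0, (-1/2 : ℚ), (1/2 : ℚ)⟩, ⟨0, 0, 0, 0⟩, ⟨0, 0, 0, 0⟩;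
        ⟨0, 0, (1/2 : ℚ), (1/2 : ℚ)⟩, ⟨0, 0, (-1/2 : ℚ), (1/2 : ℚ)⟩, ⟨0, 0, 0, 0⟩, ⟨0, 0, 0, 0⟩;
        ⟨0, 0, 0, 0⟩, ⟨0, 0, 0, 0⟩, ⟨(1/2 : ℚ), (1/2 : ℚ), (1/2 : ℚ), (1/2 : ℚ)⟩, ⟨(1/2 : ℚ), (-1/2 : ℚ), (1/2 : ℚ), (-1/2 : ℚ)⟩;
        ⟨0, 0, 0, 0⟩, ⟨0, 0, 0, 0⟩, ⟨(-1/2 : ℚ), (-1/2 : ℚ), (-1/2 : ℚ), (-1/2 : ℚ)⟩, ⟨(1/2 : ℚ), (-1/2 : ℚ), (1/2 : ℚ), (-1/2 : ℚ)⟩]),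
   (!![0, 1; 2, 1],
    !![⟨(-1/2 : ℚ), (-1/2 : ℚ), (-1/2 : ℚ), (-1/2 : ℚ)⟩, ⟨(-1/2 : ℚ), (-1/2 : ℚ), (-1/2 : ℚ), (-1/2 : ℚ)⟩, ⟨0, 0, 0, 0⟩, ⟨0, 0, 0, 0⟩;
        ⟨(1/2 : ℚ), (-1/2 : ℚ), (1/2 : ℚ), (-1/2 : ℚ)⟩, ⟨(-1/2 : ℚ), (1/2 : ℚ), (-1/2 : ℚ), (1/2 : ℚ)⟩, ⟨0, 0, 0, 0⟩, ⟨0, 0, 0, 0⟩;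
        ⟨0, 0, 0, 0⟩, ⟨0, 0, 0, 0⟩, ⟨0, 0, (1/2 : ℚ), (1/2 : ℚ)⟩, ⟨0, 0, (1/2 : ℚ), (1/2 : ℚ)⟩;
        ⟨0, 0, 0, 0⟩, ⟨0, 0, 0, 0⟩, ⟨0, 0, (-1/2 : ℚ), (1/2 : ℚ)⟩, ⟨0, 0, (1/2 : ℚ), (-1/2 : ℚ)⟩]),
   (!![2, 0; 2, 2],
    !![⟨(-1/2 : ℚ), (-1/2 : ℚ), (-1/2 : ℚ), (-1/2 : ℚ)⟩, ⟨(1/2 : ℚ), (1/2 : ℚ), (1/2 : ℚ), (1/2 : ℚ)⟩, ⟨0, 0, 0, 0⟩, ⟨0, 0, 0, 0⟩;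
        ⟨(-1/2 : ℚ), (1/2 : ℚ), (-1/2 : ℚ), (1/2 : ℚ)⟩, ⟨(-1/2 : ℚ), (1/2 : ℚ), (-1/2 : ℚ), (1/2 : ℚ)⟩, ⟨0, 0, 0, 0⟩, ⟨0, 0, 0, 0⟩;
        ⟨0, 0, 0, 0⟩, ⟨0, 0, 0, 0⟩, ⟨0, 0, (1/2 : ℚ), (1/2 : ℚ)⟩, ⟨0, 0, (-1/2 : ℚ), (-1/2 : ℚ)⟩;
        ⟨0, 0, 0, 0⟩, ⟨0, 0, 0, 0⟩, ⟨0, 0, (1/2 : ℚ), (-1/2 : ℚ)⟩, ⟨0, 0, (1/2 : ℚ), (-1/2 : ℚ)⟩]),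
   (!![2, 1; 1, 1],
    !![⟨0, 0, 0, 0⟩, ⟨0, -1, 0, 0⟩, ⟨0, 0, 0, 0⟩, ⟨0, 0, 0, 0⟩;
        ⟨0, -1, 0, 0⟩, ⟨0, 0, 0, 0⟩, ⟨0, 0, 0, 0⟩, ⟨0, 0, 0, 0⟩;
        ⟨0, 0, 0, 0⟩, ⟨0, 0, 0, 0⟩, ⟨0, 0, 0, 0⟩, ⟨0, -1, 0, 0⟩;
        ⟨0, 0, 0, 0⟩, ⟨0, 0, 0, 0⟩, ⟨0, -1, 0, 0⟩, ⟨0, 0, 0, 0⟩]),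
   (!![0, 2; 1, 0],
    !![⟨0, 0, 0, 0⟩, ⟨1, 0, 0, 0⟩, ⟨0, 0, 0, 0⟩, ⟨0, 0, 0, 0⟩;
        ⟨-1, 0, 0, 0⟩, ⟨0, 0, 0, 0⟩, ⟨0, 0, 0, 0⟩, ⟨0, 0, 0, 0⟩;
        ⟨0, 0, 0, 0⟩, ⟨0, 0, 0, 0⟩, ⟨0, 0, 0, 0⟩, ⟨1, 0, 0, 0⟩;
        ⟨0, 0, 0, 0⟩, ⟨0, 0, 0, 0⟩, ⟨-1, 0, 0, 0⟩, ⟨0, 0, 0, 0⟩])]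

def f (g : SL23) : Matrix (Fin 4) (Fin 4) K4 :=
  ((tbl.find? fun p => decide (p.1 = g.1)).map Prod.snd).getD 1

unseal Rat.add Rat.mul Rat.inv Rat.sub in
set_option maxRecDepth 100000 in
lemma f_one : f 1 = 1 := by decide

unseal Rat.add Rat.mul Rat.inv Rat.sub in
set_option maxRecDepth 100000 in
lemma f_inj1 : ∀ g : SL23, f g = 1 → g = 1 := by decide

unseal Rat.add Rat.mul Rat.inv Rat.sub in
set_option maxRecDepth 1000000 in
set_option maxHeartbeats 4000000 in
lemma f_mul_s : ∀ g : SL23, f (s * g) = f s * f g := by decide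

unseal Rat.add Rat.mul Rat.inv Rat.sub in
set_option maxRecDepth 1000000 in
set_option maxHeartbeats 4000000 in
lemma f_mul_t : ∀ g : SL23, f (t * g) = f t * f g := by decide

def step (F : Finset SL23) : Finset SL23 := (F ∪ F.image (· * s)) ∪ F.image (· * t)

set_option maxRecDepth 1000000 in
set_option maxHeartbeats 2000000 in
lemma gen_all : ∀ g : SL23, g ∈ step^[5] {1} := by decide

lemma mem_closure_st : ∀ g : SL23, g ∈ Submonoid.closure ({s, t} : Set SL23) := by
  have hs : s ∈ Submonoid.closure ({s, t} : Set SL23) :=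
    Submonoid.subset_closure (by simp)
  have ht : t ∈ Submonoid.closure ({s, t} : Set SL23) :=
    Submonoid.subset_closure (by simp)
  have hstep : ∀ F : Finset SL23,
      (∀ x ∈ F, x ∈ Submonoid.closure ({s, t} : Set SL23)) →
      ∀ x ∈ step F, x ∈ Submonoid.closure ({s, t} : Set SL23) := by
    intro F hF x hx
    simp only [step, Finset.mem_union, Finset.mem_image] at hx
    rcases hx with (hx | ⟨y, hy, rfl⟩) | ⟨y, hy, rfl⟩
    · exact hF x hx
    · exact mul_mem (hF y hy) hs
    · exact mul_mem (hF y hy) ht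
  have hiter : ∀ n, ∀ x ∈ step^[n] ({1} : Finset SL23),
      x ∈ Submonoid.closure ({s, t} : Set SL23) := by
    intro n
    induction n with
    | zero => intro x hx; simp at hx; subst hx; exact one_mem _
    | succ n ih =>
      rw [Function.iterate_succ_apply']
      exact hstep _ ih
  exact fun g => hiter 5 g (gen_all g)

lemma f_mul : ∀ g h : SL23, f (g * h) = f g * f h := by
  intro g h
  revert h
  refine Submonoid.closure_induction
    (motive := fun x _ => ∀ h : SL23, f (x * h) = f x * f h) ?_ ?_ ?_ (mem_closure_st g)
  · intro x hx
    rcases hx with rfl | hx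
    · exact f_mul_s
    · rcases hx with rfl
      exact f_mul_t
  · intro h; rw [one_mul, f_one, one_mul]
  · intro x y _ _ px py h
    rw [mul_assoc, px (y * h), py h, show f (x * y) = f x * f y from px y, mul_assoc]

def fM : SL23 →* Matrix (Fin 4) (Fin 4) K4 where
  toFun := f
  map_one' := f_one
  map_mul' := f_mul

def Fm : SL23 →* Matrix (Fin 4) (Fin 4) ℂ :=
  ((φ.mapMatrix : Matrix (Fin 4) (Fin 4) K4 →+* Matrix (Fin 4) (Fin 4) ℂ)).toMonoidHom.comp fM

def ρ : SL23 →* (Matrix (Fin 4) (Fin 4) ℂ)ˣ := Fm.toHomUnits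

unseal Rat.add Rat.mul Rat.inv Rat.sub in
set_option maxRecDepth 100000 in
lemma f_s : f s = tbl[1].2 := by decide

unseal Rat.add Rat.mul Rat.inv Rat.sub in
set_option maxRecDepth 100000 in
lemma f_t : f t = tbl[2].2 := by decide

lemma hρs : ((ρ s : (Matrix (Fin 4) (Fin 4) ℂ)ˣ) : Matrix (Fin 4) (Fin 4) ℂ) = g₁ := by
  show (f s).map φ = g₁
  rw [f_s]
  ext i j
  fin_cases i <;> fin_cases j <;>
    simp [tbl, g₁, Matrix.map_apply, Matrix.vecHead, Matrix.vecTail] <;> norm_num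

lemma hρt : ((ρ t : (Matrix (Fin 4) (Fin 4) ℂ)ˣ) : Matrix (Fin 4) (Fin 4) ℂ) = g₂ := by
  show (f t).map φ = g₂
  rw [f_t]
  ext i j
  fin_cases i <;> fin_cases j <;>
    simp [tbl, g₂, Matrix.map_apply, Matrix.vecHead, Matrix.vecTail] <;>
    (try rw [hε2]) <;> push_cast <;> ring

lemma ρ_inj : Function.Injective ρ := by
  refine (injective_iff_map_eq_one ρ).2 ?_
  intro g hg
  have h1 : (f g).map φ = (1 : Matrix (Fin 4) (Fin 4) ℂ) := congrArg Units.val hg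
  have h2 : f g = 1 := by
    have h3 : (f g).map φ = (1 : Matrix (Fin 4) (Fin 4) K4).map φ := by
      rw [h1, Matrix.map_one φ φ.map_zero φ.map_one]
    exact Matrix.ext fun i j =>
      φ_inj (by simpa [Matrix.map_apply] using congrFun (congrFun h3 i) j)
  exact f_inj1 g h2

lemma range_eq : ρ.range = G := by
  apply le_antisymm
  · rintro u ⟨g, rfl⟩
    refine Submonoid.closure_induction (motive := fun x _ => ρ x ∈ G) ?_ ?_ ?_ (mem_closure_st g)
    · intro x hx
      rcases hx with rfl | hx
      · exact Subgroup.subset_closure (Or.inl hρs)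
      · rcases hx with rfl
        exact Subgroup.subset_closure (Or.inr hρt)
    · show ρ 1 ∈ G
      rw [_root_.map_one]
      exact one_mem G
    · intro x y _ _ hx hy
      rw [_root_.map_mul]
      exact mul_mem hx hy
  · refine (Subgroup.closure_le _).2 ?_
    rintro u (hu | hu)
    · exact ⟨s, Units.ext (hρs.trans hu.symm)⟩
    · exact ⟨t, Units.ext (hρt.trans hu.symm)⟩

theorem binary_tetrahedral_group_order_and_iso :
    Finite G ∧ Nat.card G = 24 ∧
    Nonempty (G ≃* Matrix.SpecialLinearGroup (Fin 2) (ZMod 3)) := by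
  have e : G ≃* Matrix.SpecialLinearGroup (Fin 2) (ZMod 3) :=
    (MulEquiv.subgroupCongr range_eq.symm).trans (MonoidHom.ofInjective ρ_inj).symm
  refine ⟨Finite.of_equiv _ e.symm.toEquiv, ?_, ⟨e⟩⟩
  rw [Nat.card_congr e.toEquiv, Nat.card_eq_fintype_card]
  decide

end
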